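/- Let 𝔥 be the 8-dimensional real two-step nilpotent Lie algebra with basis (X_1,…,X_6, Z_1, Z_2) and nontrivial brackets [X_1,X_5] = [X_2,X_3] = Z_1 and [X_1,X_6] = [X_2,X_4] = Z_2. Then Cor(𝔥*) = {f ∈ 𝔥* : f(Z_1) = f(Z_2) = 0 and f(X_3)·f(X_6) = f(X_4)·f(X_5)}; that is, the cortex is the quadric t_3 t_6 = t_4 t_5 inside 𝔷^⊥. -/

import Mathlib

/-- The coadjoint action of the Lie algebra: `(coad X f) W = f ⁅W, X⁆`. -/
def coad {L : Type*} [LieRing L] [LieAlgebra ℝ L] (X : L) (f : Module.Dual ℝ L) :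
    Module.Dual ℝ L where
  toFun W := f ⁅W, X⁆
  map_add' a b := by simp [add_lie]
  map_smul' c a := by simp [smul_lie]

/-- The set `{ad*_X ℓ : X ∈ 𝔤, ℓ ∈ 𝔤*}` of all coadjoint tangent vectors. -/
def adStar (L : Type*) [LieRing L] [LieAlgebra ℝ L] : Set (Module.Dual ℝ L) :=
  {g | ∃ (X : L) (ℓ : Module.Dual ℝ L), g = coad X ℓ}

/-- Coordinates of a linear functional with respect to the dual basis of `B`;
this identifies `𝔤*` with `ι → ℝ`, carrying the canonical topology. -/
noncomputable def coords {ι : Type*} {L : Type*} [LieRing L] [LieAlgebra ℝ L]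
    (B : Module.Basis ι ℝ L) (f : Module.Dual ℝ L) : ι → ℝ := fun a => f (B a)

/-- The cortex `Cor(𝔤*)`: the closure (in the canonical topology of the
finite-dimensional space `𝔤*`, transported to coordinates via the dual basis)
of the set `{ad*_X ℓ : X ∈ 𝔤, ℓ ∈ 𝔤*}`. -/
def corSet {ι : Type*} {L : Type*} [LieRing L] [LieAlgebra ℝ L] (B : Module.Basis ι ℝ L) :
    Set (Module.Dual ℝ L) :=
  {f | coords B f ∈ closure (coords B '' adStar L)}

/-- Structure constants of the 8-dimensional Lie algebra `𝔥`: basis indices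
`0,…,5` are `X_1,…,X_6`, index `6` is `Z_1`, index `7` is `Z_2`; the only
nontrivial brackets are `⁅X_1,X_5⁆ = ⁅X_2,X_3⁆ = Z_1`, `⁅X_1,X_6⁆ = ⁅X_2,X_4⁆ = Z_2`. -/
def hBr {V : Type*} [AddCommGroup V] (B : Fin 8 → V) : Fin 8 → Fin 8 → V :=
  fun i j =>
    if i = 0 ∧ j = 4 ∨ i = 1 ∧ j = 2 then B 6
    else if i = 4 ∧ j = 0 ∨ i = 2 ∧ j = 1 then -B 6
    else if i = 0 ∧ j = 5 ∨ i = 1 ∧ j = 3 then B 7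
    else if i = 5 ∧ j = 0 ∨ i = 3 ∧ j = 1 then -B 7
    else 0

lemma bracket_basis {H : Type} [LieRing H] [LieAlgebra ℝ H]
    (B : Module.Basis (Fin 8) ℝ H)
    (hbr : ∀ i j : Fin 8, ⁅B i, B j⁆ = hBr (fun k => B k) i j) (i : Fin 8) (X : H) :
    ⁅B i, X⁆ = ∑ j, B.repr X j • hBr (fun k => B k) i j := by
  conv_lhs => rw [← B.sum_repr X,
    show ⁅B i, ∑ j, B.repr X j • B j⁆ = LieAlgebra.ad ℝ H (B i) (∑ j, B.repr X j • B j) from rfl,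
    map_sum]
  simp [LieAlgebra.ad_apply, lie_smul, hbr]

lemma coad_basis {H : Type} [LieRing H] [LieAlgebra ℝ H]
    (B : Module.Basis (Fin 8) ℝ H)
    (hbr : ∀ i j : Fin 8, ⁅B i, B j⁆ = hBr (fun k => B k) i j)
    (X : H) (ℓ : Module.Dual ℝ H) (i : Fin 8) :
    coords B (coad X ℓ) i = ∑ j, B.repr X j * ℓ (hBr (fun k => B k) i j) := by
  show ℓ ⁅B i, X⁆ = _
  rw [bracket_basis B hbr, map_sum]
  simp [smul_eq_mul]

lemma vec8_0 {α : Type*} (a0 a1 a2 a3 a4 a5 a6 a7 : α) :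
    ![a0,a1,a2,a3,a4,a5,a6,a7] (0 : Fin 8) = a0 := rfl
lemma vec8_1 {α : Type*} (a0 a1 a2 a3 a4 a5 a6 a7 : α) :
    ![a0,a1,a2,a3,a4,a5,a6,a7] (1 : Fin 8) = a1 := rfl
lemma vec8_2 {α : Type*} (a0 a1 a2 a3 a4 a5 a6 a7 : α) :
    ![a0,a1,a2,a3,a4,a5,a6,a7] (2 : Fin 8) = a2 := rfl
lemma vec8_3 {α : Type*} (a0 a1 a2 a3 a4 a5 a6 a7 : α) :
    ![a0,a1,a2,a3,a4,a5,a6,a7] (3 : Fin 8) = a3 := rfl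
lemma vec8_4 {α : Type*} (a0 a1 a2 a3 a4 a5 a6 a7 : α) :
    ![a0,a1,a2,a3,a4,a5,a6,a7] (4 : Fin 8) = a4 := rfl
lemma vec8_5 {α : Type*} (a0 a1 a2 a3 a4 a5 a6 a7 : α) :
    ![a0,a1,a2,a3,a4,a5,a6,a7] (5 : Fin 8) = a5 := rfl
lemma vec8_6 {α : Type*} (a0 a1 a2 a3 a4 a5 a6 a7 : α) :
    ![a0,a1,a2,a3,a4,a5,a6,a7] (6 : Fin 8) = a6 := rfl
lemma vec8_7 {α : Type*} (a0 a1 a2 a3 a4 a5 a6 a7 : α) :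
    ![a0,a1,a2,a3,a4,a5,a6,a7] (7 : Fin 8) = a7 := rfl

lemma constructed {H : Type} [LieRing H] [LieAlgebra ℝ H]
    (B : Module.Basis (Fin 8) ℝ H)
    (hbr : ∀ i j : Fin 8, ⁅B i, B j⁆ = hBr (fun k => B k) i j)
    (a b v0 v1 v2 v3 v4 v5 : ℝ) (t : Fin 8 → ℝ)
    (h0 : t 0 = v4 * a + v5 * b) (h1 : t 1 = v2 * a + v3 * b)
    (h2 : t 2 = -(v1 * a)) (h3 : t 3 = -(v1 * b))
    (h4 : t 4 = -(v0 * a)) (h5 : t 5 = -(v0 * b))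
    (h6 : t 6 = 0) (h7 : t 7 = 0) :
    coords B (coad (B.equivFun.symm ![v0, v1, v2, v3, v4, v5, 0, 0])
        ((a • B.coord 6 + b • B.coord 7 : Module.Dual ℝ H))) = t := by
  have hrep : ∀ j, B.repr (B.equivFun.symm ![v0, v1, v2, v3, v4, v5, 0, 0]) j = ![v0, v1, v2, v3, v4, v5, 0, 0] j := by
    intro j
    rw [Module.Basis.equivFun_symm_apply, Module.Basis.repr_sum_self]
  have hval : ∀ k : Fin 8, (a • B.coord 6 + b • B.coord 7 : Module.Dual ℝ H) (B k)
      = (if k = 6 then a else 0) + (if k = 7 then b else 0) := by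
    intro k
    simp [Module.Basis.coord_apply, Module.Basis.repr_self, Finsupp.single_apply, mul_ite,
      mul_one, mul_zero]
  funext i
  rw [coad_basis B hbr]
  fin_cases i <;>
    simp [Fin.sum_univ_eight, hBr, hrep, hval, vec8_0, vec8_1, vec8_2, vec8_3, vec8_4, vec8_5, vec8_6, vec8_7, h0, h1, h2, h3, h4, h5, h6, h7]

/-- For the 8-dimensional two-step nilpotent Lie algebra `𝔥` with basis
`(X_1,…,X_6,Z_1,Z_2)` (indices `0,…,5` for the `X`'s, `6,7` for the `Z`'s) and nontrivial
brackets `⁅X_1,X_5⁆ = ⁅X_2,X_3⁆ = Z_1`, `⁅X_1,X_6⁆ = ⁅X_2,X_4⁆ = Z_2`, the cortex of `𝔥*`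
is `{f : f(Z_1) = f(Z_2) = 0 and f(X_3)f(X_6) = f(X_4)f(X_5)}`. -/
theorem cortex_h8 (H : Type) [LieRing H] [LieAlgebra ℝ H]
    (B : Module.Basis (Fin 8) ℝ H)
    (hbr : ∀ i j : Fin 8, ⁅B i, B j⁆ = hBr (fun k => B k) i j) :
    corSet B
      = {f : Module.Dual ℝ H | f (B 6) = 0 ∧ f (B 7) = 0 ∧
          f (B 2) * f (B 5) = f (B 3) * f (B 4)} := by
  have key : coords B '' adStar H
      = {t : Fin 8 → ℝ | t 6 = 0 ∧ t 7 = 0 ∧ t 2 * t 5 = t 3 * t 4} := by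
    ext t
    constructor
    · rintro ⟨f, ⟨X, ℓ, rfl⟩, rfl⟩
      have c : ∀ i, coords B (coad X ℓ) i
          = ∑ j, B.repr X j * ℓ (hBr (fun k => B k) i j) := coad_basis B hbr X ℓ
      refine ⟨?_, ?_, ?_⟩
      · rw [c 6]; simp [hBr, Fin.sum_univ_eight]
      · rw [c 7]; simp [hBr, Fin.sum_univ_eight]
      · rw [c 2, c 3, c 4, c 5]
        simp [hBr, Fin.sum_univ_eight]
        ring
    · rintro ⟨h6, h7, hq⟩
      by_cases h2 : t 2 ≠ 0
      · refine ⟨_, ⟨_, _, rfl⟩, constructed B hbr (t 2) (t 3)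
          (-(t 4)/(t 2)) (-1) (t 1/(t 2)) 0 (t 0/(t 2)) 0 t
          ?_ ?_ ?_ ?_ ?_ ?_ h6 h7⟩
        · field_simp; ring
        · field_simp; ring
        · ring
        · ring
        · field_simp
        · field_simp
          linear_combination hq
      push_neg at h2
      by_cases h3 : t 3 ≠ 0
      · refine ⟨_, ⟨_, _, rfl⟩, constructed B hbr (t 2) (t 3)
          (-(t 5)/(t 3)) (-1) 0 (t 1/(t 3)) 0 (t 0/(t 3)) t
          ?_ ?_ ?_ ?_ ?_ ?_ h6 h7⟩
        · field_simp; ring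
        · field_simp; ring
        · ring
        · ring
        · field_simp
          linear_combination -hq
        · field_simp
      push_neg at h3
      by_cases h4 : t 4 ≠ 0
      · refine ⟨_, ⟨_, _, rfl⟩, constructed B hbr (t 4) (t 5)
          (-1) 0 (t 1/(t 4)) 0 (t 0/(t 4)) 0 t
          ?_ ?_ ?_ ?_ ?_ ?_ h6 h7⟩
        · field_simp; ring
        · field_simp; ring
        · simp [h2]
        · simp [h3]
        · ring
        · ring
      push_neg at h4
      by_cases h5 : t 5 ≠ 0
      · refine ⟨_, ⟨_, _, rfl⟩, constructed B hbr (t 4) (t 5)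
          (-1) 0 0 (t 1/(t 5)) 0 (t 0/(t 5)) t
          ?_ ?_ ?_ ?_ ?_ ?_ h6 h7⟩
        · field_simp; ring
        · field_simp; ring
        · simp [h2]
        · simp [h3]
        · ring
        · ring
      push_neg at h5
      · refine ⟨_, ⟨_, _, rfl⟩, constructed B hbr 1 0
          0 0 (t 1) 0 (t 0) 0 t
          ?_ ?_ ?_ ?_ ?_ ?_ h6 h7⟩
        · ring
        · ring
        · simp [h2]
        · simp [h3]
        · simp [h4]
        · simp [h5]
  rw [corSet, key]
  have hclosed : IsClosed {t : Fin 8 → ℝ | t 6 = 0 ∧ t 7 = 0 ∧ t 2 * t 5 = t 3 * t 4} := by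
    exact IsClosed.inter (isClosed_eq (continuous_apply 6) continuous_const)
      (IsClosed.inter (isClosed_eq (continuous_apply 7) continuous_const)
        (isClosed_eq ((continuous_apply 2).mul (continuous_apply 5))
          ((continuous_apply 3).mul (continuous_apply 4))))
  rw [hclosed.closure_eq]
  rfl
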